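/- arXiv:1306.0108 — 3 statements merged into one kernel-verified Lean document; each statement's English description precedes it below -/
import Mathlib

section
/- Let R be a commutative local ring and A ∈ M₂(R). Then the following are equivalent: (1) A is strongly P-clean; (2) A − A² ∈ M₂(P(R)); (3) A ∈ M₂(P(R)), or I₂ − A ∈ M₂(P(R)), or the equation x² − tr(A)·x + det(A) = 0 has a root in P(R) and a root in 1 + P(R). -/
/-- An element `a` of a ring is strongly nilpotent if every sequence
`a = a₀, a₁, a₂, …` with `a_{i+1} ∈ a_i R a_i` is eventually zero. -/
def IsStronglyNilpotent {R : Type*} [Ring R] (a : R) : Prop :=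
  ∀ f : ℕ → R, f 0 = a → (∀ i, ∃ r : R, f (i + 1) = f i * r * f i) → ∃ n, f n = 0

/-- The prime radical `P(R)`: the set of strongly nilpotent elements
(equivalently, the intersection of all prime ideals). -/
def primeRadical (R : Type*) [Ring R] : Set R :=
  {a | IsStronglyNilpotent a}

/-- An element is strongly P-clean if it is the sum of an idempotent and an
element of the prime radical that commute. -/
def IsStronglyPClean {R : Type*} [Ring R] (x : R) : Prop :=
  ∃ e w : R, IsIdempotentElem e ∧ w ∈ primeRadical R ∧ x = e + w ∧ e * w = w * e

/-- A ring is strongly P-clean if each of its elements is strongly P-clean. -/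
def StronglyPCleanRing (R : Type*) [Ring R] : Prop :=
  ∀ x : R, IsStronglyPClean x


section helpers


variable {R : Type*} [CommRing R]

lemma entries_of_sn {w : Matrix (Fin 2) (Fin 2) R}
    (hw : IsStronglyNilpotent w) (i j : Fin 2) : w i j ∈ nilradical R := by
  classical
  by_contra h
  rw [nilradical_eq_sInf, Submodule.mem_sInf] at h
  push_neg at h
  obtain ⟨p, hp, hmem⟩ := h
  haveI hpp : Ideal.IsPrime p := hp
  set P : Matrix (Fin 2) (Fin 2) R → Prop := fun M => ∃ a b, M a b ∉ p with hP
  have step : ∀ M, P M → ∃ r, P (M * r * M) := by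
    rintro M ⟨a, b, hab⟩
    refine ⟨Matrix.single b a (1:R), a, b, ?_⟩
    have hMe : (M * Matrix.single b a (1:R) * M) a b = M a b * M a b := by
      simp only [Matrix.mul_apply, Matrix.single, Fin.sum_univ_two, Matrix.of_apply]
      fin_cases a <;> fin_cases b <;> simp
    rw [hMe]
    intro hmul
    rcases hpp.mem_or_mem hmul with h1 | h1 <;> exact hab h1
  choose r hr using step
  let f : ℕ → {M : Matrix (Fin 2) (Fin 2) R // P M} := fun n =>
    Nat.rec ⟨w, ⟨i, j, hmem⟩⟩ (fun _ prev => ⟨prev.1 * r prev.1 prev.2 * prev.1, hr prev.1 prev.2⟩) n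
  obtain ⟨n, hn⟩ := hw (fun n => (f n).1) rfl (fun k => ⟨r (f k).1 (f k).2, rfl⟩)
  obtain ⟨a, b, hab⟩ := (f n).2
  rw [hn] at hab
  exact hab p.zero_mem

lemma sn_of_entries {w : Matrix (Fin 2) (Fin 2) R}
    (hw : ∀ i j, w i j ∈ nilradical R) : IsStronglyNilpotent w := by
  classical
  set I : Ideal R := Ideal.span (Set.range fun p : Fin 2 × Fin 2 => w p.1 p.2) with hI
  have hIrad : I ≤ (⊥ : Ideal R).radical := by
    rw [Ideal.span_le]
    rintro x ⟨⟨a, b⟩, rfl⟩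
    exact hw a b
  have hIfg : I.FG := ⟨(Finset.univ.image fun p : Fin 2 × Fin 2 => w p.1 p.2), by
    rw [hI]; congr 1; ext x; simp⟩
  obtain ⟨N, hN⟩ := Ideal.exists_pow_le_of_le_radical_of_fg hIrad hIfg
  intro f hf0 hstep
  have key : ∀ n, ∀ a b, f n a b ∈ I ^ (2 ^ n) := by
    intro n
    induction n with
    | zero =>
      intro a b
      rw [hf0]
      have hm : w a b ∈ Set.range fun p : Fin 2 × Fin 2 => w p.1 p.2 := ⟨(a, b), rfl⟩
      simpa using Ideal.subset_span hm
    | succ n ih =>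
      intro a b
      obtain ⟨r, hr⟩ := hstep n
      rw [hr]
      have h2 : (2 : ℕ) ^ (n + 1) = 2 ^ n + 2 ^ n := by ring
      rw [h2, pow_add]
      simp only [Matrix.mul_apply]
      apply Ideal.sum_mem
      intro c _
      apply Ideal.mul_mem_mul
      · apply Ideal.sum_mem
        intro d _
        exact Ideal.mul_mem_right _ _ (ih a d)
      · exact ih c b
  refine ⟨N, ?_⟩
  ext a b
  have hab := key N a b
  have hle : I ^ (2 ^ N) ≤ ⊥ :=
    le_trans (Ideal.pow_le_pow_right (Nat.le_of_lt (Nat.lt_two_pow_self (n := N)))) hN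
  simpa using hle hab

lemma ch2 (A : Matrix (Fin 2) (Fin 2) R) :
    A * A = A.trace • A - A.det • (1 : Matrix (Fin 2) (Fin 2) R) := by
  ext i j
  fin_cases i <;> fin_cases j <;>
    simp [Matrix.mul_apply, Fin.sum_univ_two, Matrix.trace_fin_two, Matrix.det_fin_two,
      Matrix.one_apply] <;> ring

lemma newton :
    ∀ n : ℕ, ∀ d t : R, d ∈ nilradical R → d ^ (2 ^ n) = 0 → t - 1 ∈ nilradical R →
      ∃ x ∈ nilradical R, x * x - t * x + d = 0 := by
  intro n
  induction n with
  | zero =>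
    intro d t hd hd0 ht
    refine ⟨0, (nilradical R).zero_mem, ?_⟩
    rw [pow_zero, pow_one] at hd0
    rw [hd0]; ring
  | succ n ih =>
    intro d t hd hd0 ht
    have htu : IsUnit t := by
      have := (mem_nilradical.mp ht).isUnit_one_add
      simpa using this
    obtain ⟨tu, rfl2⟩ := htu
    set u : R := ↑tu⁻¹ with hu
    have hut : t * u = 1 := by rw [← rfl2, hu]; exact_mod_cast tu.mul_inv
    set d1 : R := d * d * (u * u) with hd1
    have hd1mem : d1 ∈ nilradical R := Ideal.mul_mem_right _ _ (Ideal.mul_mem_right _ _ hd)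
    have hd10 : d1 ^ (2 ^ n) = 0 := by
      have h : d1 ^ (2 ^ n) = d ^ (2 ^ (n + 1)) * (u * u) ^ (2 ^ n) := by
        rw [hd1, mul_pow, mul_pow, ← pow_add]
        ring_nf
      rw [h, hd0, zero_mul]
    set t1 : R := t - 2 * (d * u) with ht1
    have ht1mem : t1 - 1 ∈ nilradical R := by
      have h : t1 - 1 = (t - 1) - 2 * (d * u) := by rw [ht1]; ring
      rw [h]
      exact Ideal.sub_mem _ ht (Ideal.mul_mem_left _ _ (Ideal.mul_mem_right _ _ hd))
    obtain ⟨z, hz, hzeq⟩ := ih d1 t1 hd1mem hd10 ht1mem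
    refine ⟨d * u + z, Ideal.add_mem _ (Ideal.mul_mem_right _ _ hd) hz, ?_⟩
    rw [ht1, hd1] at hzeq
    linear_combination hzeq - d * hut

lemma roots_case (A : Matrix (Fin 2) (Fin 2) R)
    (htrN : A.trace - 1 ∈ nilradical R) (hdetN : A.det ∈ nilradical R) :
    (∃ x ∈ nilradical R, x * x - A.trace * x + A.det = 0) ∧
      (∃ y : R, y - 1 ∈ nilradical R ∧ y * y - A.trace * y + A.det = 0) := by
  obtain ⟨k, hk⟩ := mem_nilradical.mp hdetN
  have hk2 : A.det ^ (2 ^ k) = 0 := by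
    have hle : k ≤ 2 ^ k := (Nat.lt_two_pow_self (n := k)).le
    calc A.det ^ (2 ^ k) = A.det ^ k * A.det ^ (2 ^ k - k) := by
          rw [← pow_add, Nat.add_sub_cancel' hle]
      _ = 0 := by rw [hk, zero_mul]
  obtain ⟨x, hxN, hxeq⟩ := newton k A.det A.trace hdetN hk2 htrN
  refine ⟨⟨x, hxN, hxeq⟩, A.trace - x, ?_, by linear_combination hxeq⟩
  have h' : A.trace - x - 1 = (A.trace - 1) - x := by ring
  rw [h']
  exact Ideal.sub_mem _ htrN hxN

end helpers

/-- **Theorem 4.4.** Let `R` be a commutative local ring and `A ∈ M₂(R)`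
(here `P(R)` is the nilradical of `R`). The following are equivalent:
(1) `A` is strongly P-clean;
(2) `A - A² ∈ M₂(P(R))`;
(3) `A ∈ M₂(P(R))`, or `I₂ - A ∈ M₂(P(R))`, or the equation
`x² - tr(A)·x + det(A) = 0` has a root in `P(R)` and a root in `1 + P(R)`. -/
theorem isStronglyPClean_matrix_commLocal_tfae (R : Type*) [CommRing R]
    [IsLocalRing R] (A : Matrix (Fin 2) (Fin 2) R) :
    [IsStronglyPClean A,
     ∀ i j, (A - A * A) i j ∈ nilradical R,
     (∀ i j, A i j ∈ nilradical R) ∨ (∀ i j, (1 - A) i j ∈ nilradical R) ∨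
       ((∃ x ∈ nilradical R, x * x - A.trace * x + A.det = 0) ∧
         (∃ y : R, y - 1 ∈ nilradical R ∧ y * y - A.trace * y + A.det = 0))].TFAE := by
  tfae_have 1 → 2 := by
    rintro ⟨e, w, he, hw, hA, hcomm⟩ i j
    have hwn : ∀ i j, w i j ∈ nilradical R := entries_of_sn hw
    have hM : A - A * A = w - e * w - w * e - w * w := by
      rw [hA, add_mul, mul_add, mul_add, he.eq]
      abel
    rw [hM]
    simp only [Matrix.sub_apply]
    refine Ideal.sub_mem _ (Ideal.sub_mem _ (Ideal.sub_mem _ (hwn i j) ?_) ?_) ?_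
    · rw [Matrix.mul_apply]; exact Ideal.sum_mem _ fun k _ => Ideal.mul_mem_left _ _ (hwn k j)
    · rw [Matrix.mul_apply]; exact Ideal.sum_mem _ fun k _ => Ideal.mul_mem_right _ _ (hwn i k)
    · rw [Matrix.mul_apply]; exact Ideal.sum_mem _ fun k _ => Ideal.mul_mem_right _ _ (hwn i k)
  tfae_have 2 → 3 := by
    intro h2
    set N := nilradical R with hNdef
    set π := Ideal.Quotient.mk N with hπ
    have hNtop : N ≠ ⊤ := by
      intro htop
      have h1 : (1 : R) ∈ N := htop ▸ Submodule.mem_top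
      obtain ⟨k, hk⟩ := mem_nilradical.mp h1
      rw [one_pow] at hk
      exact one_ne_zero hk
    haveI : Nontrivial (R ⧸ N) := Ideal.Quotient.nontrivial_iff.mpr hNtop
    haveI : IsLocalRing (R ⧸ N) :=
      IsLocalRing.of_surjective' (Ideal.Quotient.mk N) Ideal.Quotient.mk_surjective
    have idem01 : ∀ q : R ⧸ N, q * q = q → q = 0 ∨ q = 1 := by
      intro q hq
      rcases IsLocalRing.isUnit_or_isUnit_one_sub_self q with hu | hu
      · right
        obtain ⟨v, hv⟩ := hu.exists_left_inv
        linear_combination v * hq + (1 - q) * hv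
      · left
        obtain ⟨v, hv⟩ := hu.exists_left_inv
        linear_combination (-v) * hq + (-q) * hv
    have E : ∀ i j, π ((A * A) i j) = π (A i j) := by
      intro i j
      have h := Ideal.Quotient.eq_zero_iff_mem.mpr (h2 i j)
      rw [Matrix.sub_apply, map_sub, sub_eq_zero] at h
      exact h.symm
    obtain ⟨a, ha⟩ : ∃ a, π (A 0 0) = a := ⟨_, rfl⟩
    obtain ⟨b, hb⟩ : ∃ b, π (A 0 1) = b := ⟨_, rfl⟩
    obtain ⟨c, hc⟩ : ∃ c, π (A 1 0) = c := ⟨_, rfl⟩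
    obtain ⟨dd, hdd⟩ : ∃ dd, π (A 1 1) = dd := ⟨_, rfl⟩
    have e11 : a * a + b * c = a := by
      have h := E 0 0
      rw [Matrix.mul_apply, Fin.sum_univ_two, map_add, map_mul, map_mul, ha, hb, hc] at h
      exact h
    have e12 : a * b + b * dd = b := by
      have h := E 0 1
      rw [Matrix.mul_apply, Fin.sum_univ_two, map_add, map_mul, map_mul, ha, hb, hdd] at h
      exact h
    have e21 : c * a + dd * c = c := by
      have h := E 1 0
      rw [Matrix.mul_apply, Fin.sum_univ_two, map_add, map_mul, map_mul, ha, hc, hdd] at h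
      exact h
    have e22 : c * b + dd * dd = dd := by
      have h := E 1 1
      rw [Matrix.mul_apply, Fin.sum_univ_two, map_add, map_mul, map_mul, hb, hc, hdd] at h
      exact h
    have hsb : (a + dd - 1) * b = 0 := by linear_combination e12
    have hsc : (a + dd - 1) * c = 0 := by linear_combination e21
    have hsa : (a + dd - 1) * a = a * dd - b * c := by linear_combination e11
    have hsd : (a + dd - 1) * dd = a * dd - b * c := by linear_combination e22
    have hss : (a + dd - 1) * (a + dd - 1) + (a + dd - 1) = 2 * (a * dd - b * c) := by
      linear_combination e11 + e22
    by_cases hu : IsUnit (a + dd - 1)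
    · obtain ⟨v, hv⟩ := hu.exists_left_inv
      have hb0 : b = 0 := by linear_combination v * hsb - b * hv
      have hc0 : c = 0 := by linear_combination v * hsc - c * hv
      have had : a = dd := by linear_combination v * hsa - v * hsd - a * hv + dd * hv
      have haa : a * a = a := by linear_combination e11 - c * hb0
      rcases idem01 a haa with h0 | h1
      · refine Or.inl fun i j => ?_
        apply Ideal.Quotient.eq_zero_iff_mem.mp
        fin_cases i <;> fin_cases j
        · show π (A 0 0) = 0
          rw [ha]; exact h0
        · show π (A 0 1) = 0
          rw [hb]; exact hb0
        · show π (A 1 0) = 0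
          rw [hc]; exact hc0
        · show π (A 1 1) = 0
          rw [hdd]; exact had.symm.trans h0
      · refine Or.inr (Or.inl fun i j => ?_)
        apply Ideal.Quotient.eq_zero_iff_mem.mp
        fin_cases i <;> fin_cases j
        · show π ((1 - A) 0 0) = 0
          have he' : (1 - A : Matrix (Fin 2) (Fin 2) R) 0 0 = 1 - A 0 0 := by
            simp [Matrix.sub_apply]
          rw [he', map_sub, map_one, ha]
          linear_combination -h1
        · show π ((1 - A) 0 1) = 0
          have he' : (1 - A : Matrix (Fin 2) (Fin 2) R) 0 1 = -(A 0 1) := by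
            simp [Matrix.sub_apply]
          rw [he', map_neg, hb, hb0, neg_zero]
        · show π ((1 - A) 1 0) = 0
          have he' : (1 - A : Matrix (Fin 2) (Fin 2) R) 1 0 = -(A 1 0) := by
            simp [Matrix.sub_apply]
          rw [he', map_neg, hc, hc0, neg_zero]
        · show π ((1 - A) 1 1) = 0
          have he' : (1 - A : Matrix (Fin 2) (Fin 2) R) 1 1 = 1 - A 1 1 := by
            simp [Matrix.sub_apply]
          rw [he', map_sub, map_one, hdd]
          linear_combination had - h1
    · have hsm : (a + dd - 1) ∈ IsLocalRing.maximalIdeal (R ⧸ N) :=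
        (IsLocalRing.mem_maximalIdeal _).mpr hu
      have hkey : (a + dd - 1) = 0 ∧ a * dd - b * c = 0 := by
        by_cases hu2 : IsUnit (dd - a)
        · obtain ⟨v, hv⟩ := hu2.exists_left_inv
          have hsda : (a + dd - 1) * (dd - a) = 0 := by linear_combination hsd - hsa
          have hs0 : (a + dd - 1) = 0 := by
            linear_combination v * hsda - (a + dd - 1) * hv
          exact ⟨hs0, by linear_combination a * hs0 - hsa⟩
        · have hau : IsUnit a := by
            by_contra hau
            have h1mem : (1 : R ⧸ N) ∈ IsLocalRing.maximalIdeal (R ⧸ N) := by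
              have h' : (1 : R ⧸ N) = a + a + (dd - a) - (a + dd - 1) := by ring
              rw [h']
              exact Ideal.sub_mem _ (Ideal.add_mem _ (Ideal.add_mem _
                ((IsLocalRing.mem_maximalIdeal _).mpr hau) ((IsLocalRing.mem_maximalIdeal _).mpr hau))
                ((IsLocalRing.mem_maximalIdeal _).mpr hu2)) hsm
            exact (Ideal.ne_top_iff_one _).mp
              (IsLocalRing.maximalIdeal.isMaximal _).ne_top h1mem
          obtain ⟨va, hva⟩ := hau.exists_left_inv
          have hbc : b * c = a - a * a := by linear_combination e11
          have h1 : (a + dd - 1) * (a - a * a) = 0 := by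
            linear_combination c * hsb - (a + dd - 1) * hbc
          have h2' : (a + dd - 1) * (1 - a) = 0 := by
            linear_combination va * h1 - ((a + dd - 1) - (a + dd - 1) * a) * hva
          have hd's : a * dd - b * c = (a + dd - 1) := by linear_combination -hsa - h2'
          have hss' : (a + dd - 1) * (a + dd - 1) = (a + dd - 1) := by
            linear_combination hss + 2 * hd's
          rcases idem01 _ hss' with h | h
          · exact ⟨h, by linear_combination hd's + h⟩
          · exact absurd (by rw [h]; exact isUnit_one) hu
      obtain ⟨hs0, hd0⟩ := hkey
      refine Or.inr (Or.inr (roots_case A ?_ ?_))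
      · apply Ideal.Quotient.eq_zero_iff_mem.mp
        rw [map_sub, map_one, Matrix.trace_fin_two, map_add, ha, hdd]
        linear_combination hs0
      · apply Ideal.Quotient.eq_zero_iff_mem.mp
        rw [Matrix.det_fin_two, map_sub, map_mul, map_mul, ha, hb, hc, hdd]
        linear_combination hd0
  tfae_have 3 → 1 := by
    rintro (h | h | ⟨⟨x, hx, hxeq⟩, y, hy1, hyeq⟩)
    · exact ⟨0, A, IsIdempotentElem.zero, sn_of_entries h, (zero_add A).symm,
        by rw [zero_mul, mul_zero]⟩
    · refine ⟨1, A - 1, IsIdempotentElem.one, sn_of_entries fun i j => ?_, by abel,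
        by rw [one_mul, mul_one]⟩
      have h' : (A - 1 : Matrix (Fin 2) (Fin 2) R) i j = -((1 - A : Matrix (Fin 2) (Fin 2) R) i j) := by
        simp [Matrix.sub_apply]
      rw [h']
      exact neg_mem (h i j)
    · have hyx : IsUnit (y - x) := by
        have hnil : IsNilpotent ((y - 1) - x) := mem_nilradical.mp (Ideal.sub_mem _ hy1 hx)
        have h' : y - x = 1 + ((y - 1) - x) := by ring
        rw [h']
        exact hnil.isUnit_one_add
      obtain ⟨v, hv⟩ := hyx.exists_left_inv
      have h3 : (y - x) * (x + y - A.trace) = 0 := by linear_combination hyeq - hxeq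
      have htxy : A.trace = x + y := by linear_combination (x + y - A.trace) * hv - v * h3
      have hdxy : A.det = x * y := by linear_combination hxeq + x * htxy
      have hch := ch2 A
      have h1 : (A - x • 1) * (A - y • 1)
          = A * A - (x + y) • A + (x * y) • (1 : Matrix (Fin 2) (Fin 2) R) := by
        ext i j
        fin_cases i <;> fin_cases j <;>
          simp [Matrix.mul_apply, Fin.sum_univ_two, Matrix.one_apply, smul_eq_mul] <;> ring
      have hfac : (A - x • 1) * (A - y • 1) = 0 := by
        rw [h1, hch, ← htxy, ← hdxy]; abel
      have hsq : (A - x • 1) * (A - x • 1)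
          = (y - x) • (A - x • 1) + (A - x • 1) * (A - y • 1) := by
        ext i j
        fin_cases i <;> fin_cases j <;>
          simp [Matrix.mul_apply, Fin.sum_univ_two, Matrix.one_apply, smul_eq_mul] <;> ring
      refine ⟨v • (A - x • 1), A - v • (A - x • 1), ?_, ?_, ?_, ?_⟩
      · show (v • (A - x • 1)) * (v • (A - x • 1)) = v • (A - x • 1)
        rw [smul_mul_assoc, mul_smul_comm, smul_smul, hsq, hfac, add_zero, smul_smul]
        congr 1
        linear_combination v * hv
      · refine sn_of_entries fun i j => ?_
        have h1v : (1 : R) - v ∈ nilradical R := by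
          have heq : (1 : R) - v = v * ((y - 1) - x) := by linear_combination -hv
          rw [heq]
          exact Ideal.mul_mem_left _ _ (Ideal.sub_mem _ hy1 hx)
        have hw' : (A - v • (A - x • (1 : Matrix (Fin 2) (Fin 2) R))) i j
            = (1 - v) * A i j + (v * x) * (1 : Matrix (Fin 2) (Fin 2) R) i j := by
          simp only [Matrix.sub_apply, Matrix.smul_apply, smul_eq_mul]
          ring
        rw [hw']
        exact Ideal.add_mem _ (Ideal.mul_mem_right _ _ h1v)
          (Ideal.mul_mem_right _ _ (Ideal.mul_mem_left _ _ hx))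
      · abel
      · have hAe : (v • (A - x • 1)) * A = A * (v • (A - x • 1)) := by
          rw [smul_mul_assoc, mul_smul_comm]
          congr 1
          rw [sub_mul, mul_sub, smul_mul_assoc, mul_smul_comm, one_mul, mul_one]
        rw [mul_sub, sub_mul, hAe]
  tfae_finish
end

section
/- Let R be a commutative local ring and A ∈ M₂(R). If A is strongly P-clean, then either A ∈ M₂(P(R)), or I₂ − A ∈ M₂(P(R)), or tr(A) ∈ 1 + P(R) and tr(A)² − 4·det(A) = u² for some u ∈ 1 + P(R). -/
lemma mul_std_mul {R : Type*} [CommRing R] (M N : Matrix (Fin 2) (Fin 2) R) (i j : Fin 2) :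
    (M * Matrix.single j i (1:R) * N) i j = M i j * N i j := by
  fin_cases i <;> fin_cases j <;>
    simp [Matrix.mul_apply, Matrix.single, Fin.sum_univ_two]

lemma entry_nilpotent {R : Type*} [CommRing R] (W : Matrix (Fin 2) (Fin 2) R)
    (hW : IsStronglyNilpotent W) (i j : Fin 2) : W i j ∈ nilradical R := by
  classical
  let B : Matrix (Fin 2) (Fin 2) R := Matrix.single j i 1
  let f : ℕ → Matrix (Fin 2) (Fin 2) R := fun n => Nat.rec W (fun _ M => M * B * M) n
  obtain ⟨n, hn⟩ := hW f rfl (fun k => ⟨B, rfl⟩)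
  have key : ∀ k, f k i j = (W i j) ^ (2 ^ k) := by
    intro k
    induction k with
    | zero => simp [f]
    | succ k ih =>
      have hstep : f (k+1) i j = f k i j * f k i j := mul_std_mul (f k) (f k) i j
      rw [hstep, ih, ← pow_add, pow_succ, mul_two]
  rw [mem_nilradical]
  exact ⟨2 ^ n, by rw [← key n, hn]; simp⟩

lemma idem_zero_or_one {R : Type*} [CommRing R] [IsLocalRing R] {e : R}
    (h : e * e = e) : e = 0 ∨ e = 1 := by
  rcases IsLocalRing.isUnit_or_isUnit_one_sub_self e with hu | hu
  · right
    have : e * e = e * 1 := by rw [h, mul_one]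
    exact hu.mul_left_cancel this
  · left
    have : (1 - e) * e = (1 - e) * 0 := by linear_combination -h
    exact hu.mul_left_cancel this


/-- **Theorem 5.1.** Let `R` be a commutative local ring and `A ∈ M₂(R)`
(here `P(R)` is the nilradical of `R`). If `A` is strongly P-clean, then
`A ∈ M₂(P(R))`, or `I₂ - A ∈ M₂(P(R))`, or `tr(A) ∈ 1 + P(R)` and
`tr(A)² - 4·det(A) = u²` for some `u ∈ 1 + P(R)`. -/
theorem stronglyPClean_matrix_discriminant (R : Type*) [CommRing R]
    [IsLocalRing R] (A : Matrix (Fin 2) (Fin 2) R)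
    (hA : IsStronglyPClean A) :
    (∀ i j, A i j ∈ nilradical R) ∨ (∀ i j, (1 - A) i j ∈ nilradical R) ∨
      (A.trace - 1 ∈ nilradical R ∧
        ∃ u : R, u - 1 ∈ nilradical R ∧
          A.trace * A.trace - 4 * A.det = u * u) := by
  obtain ⟨E, W, hE, hW, hAEW, hcomm⟩ := hA
  subst hAEW
  have hWn : ∀ i j, W i j ∈ nilradical R := entry_nilpotent W hW
  have e00 : E 0 0 * E 0 0 + E 0 1 * E 1 0 = E 0 0 := by
    have h := congrFun (congrFun (hE : E * E = E) 0) 0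
    simpa [Matrix.mul_apply, Fin.sum_univ_two] using h
  have e01 : E 0 0 * E 0 1 + E 0 1 * E 1 1 = E 0 1 := by
    have h := congrFun (congrFun (hE : E * E = E) 0) 1
    simpa [Matrix.mul_apply, Fin.sum_univ_two] using h
  have e10 : E 1 0 * E 0 0 + E 1 1 * E 1 0 = E 1 0 := by
    have h := congrFun (congrFun (hE : E * E = E) 1) 0
    simpa [Matrix.mul_apply, Fin.sum_univ_two] using h
  have e11 : E 1 0 * E 0 1 + E 1 1 * E 1 1 = E 1 1 := by
    have h := congrFun (congrFun (hE : E * E = E) 1) 1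
    simpa [Matrix.mul_apply, Fin.sum_univ_two] using h
  have c00 : E 0 0 * W 0 0 + E 0 1 * W 1 0 = W 0 0 * E 0 0 + W 0 1 * E 1 0 := by
    have h := congrFun (congrFun hcomm 0) 0
    simpa [Matrix.mul_apply, Fin.sum_univ_two] using h
  have c01 : E 0 0 * W 0 1 + E 0 1 * W 1 1 = W 0 0 * E 0 1 + W 0 1 * E 1 1 := by
    have h := congrFun (congrFun hcomm 0) 1
    simpa [Matrix.mul_apply, Fin.sum_univ_two] using h
  have c10 : E 1 0 * W 0 0 + E 1 1 * W 1 0 = W 1 0 * E 0 0 + W 1 1 * E 1 0 := by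
    have h := congrFun (congrFun hcomm 1) 0
    simpa [Matrix.mul_apply, Fin.sum_univ_two] using h
  have hdet : E.det * E.det = E.det := by rw [← Matrix.det_mul, hE]
  rcases idem_zero_or_one hdet with hd0 | hd1
  · -- det E = 0
    rw [Matrix.det_fin_two] at hd0
    have ht : (E 0 0 + E 1 1) * (E 0 0 + E 1 1) = E 0 0 + E 1 1 := by
      linear_combination e00 + e11 + 2 * hd0
    rcases idem_zero_or_one ht with ht0 | ht1
    · -- trace E = 0 : E = 0, so A = W
      left
      have ha : E 0 0 = 0 := by linear_combination (-1) * e00 + E 0 0 * ht0 - hd0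
      have hdd : E 1 1 = 0 := by linear_combination ht0 - ha
      have hb : E 0 1 = 0 := by linear_combination (-1) * e01 + E 0 1 * ht0
      have hc : E 1 0 = 0 := by linear_combination (-1) * e10 + E 1 0 * ht0
      intro i j
      have hz : E i j = 0 := by
        fin_cases i <;> fin_cases j <;> first | exact ha | exact hb | exact hc | exact hdd
      have hrw : (E + W) i j = E i j + W i j := rfl
      rw [hrw, hz, zero_add]
      exact hWn i j
    · -- trace E = 1, det E = 0 : discriminant case
      right; right
      have hd : E 1 1 = 1 - E 0 0 := by linear_combination ht1
      have hbc : E 0 1 * E 1 0 = E 0 0 - E 0 0 * E 0 0 := by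
        linear_combination (-1) * hd0 + E 0 0 * hd
      have hC1 : E 0 1 * W 1 0 = W 0 1 * E 1 0 := by linear_combination c00
      have hC2 : W 0 1 * (2 * E 0 0 - 1) = E 0 1 * (W 0 0 - W 1 1) := by
        linear_combination c01 + W 0 1 * ht1
      have hC3 : E 1 0 * (W 0 0 - W 1 1) = W 1 0 * (2 * E 0 0 - 1) := by
        linear_combination c10 - W 1 0 * ht1
      constructor
      · have hrw : (E + W).trace - 1 = W 0 0 + W 1 1 := by
          simp only [Matrix.trace_fin_two, Matrix.add_apply]
          linear_combination ht1
        rw [hrw]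
        exact add_mem (hWn 0 0) (hWn 1 1)
      · refine ⟨1 + (2 * E 0 0 - 1) * (W 0 0 - W 1 1) + 4 * (E 0 1 * W 1 0), ?_, ?_⟩
        · have hrw : 1 + (2 * E 0 0 - 1) * (W 0 0 - W 1 1) + 4 * (E 0 1 * W 1 0) - 1
              = (2 * E 0 0 - 1) * (W 0 0 - W 1 1) + 4 * (E 0 1 * W 1 0) := by ring
          rw [hrw]
          exact add_mem
            (Ideal.mul_mem_left _ _ (sub_mem (hWn 0 0) (hWn 1 1)))
            (Ideal.mul_mem_left _ _ (Ideal.mul_mem_left _ _ (hWn 1 0)))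
        · simp only [Matrix.trace_fin_two, Matrix.det_fin_two, Matrix.add_apply]
          rw [hd]
          linear_combination
            (4 * E 1 0 * (W 0 0 - W 1 1)) * hC2
            + (8 * E 0 1 * (W 0 0 - W 1 1) - 4 * W 0 1 * (2 * E 0 0 - 1)) * hC3
            - (16 * W 0 1 * W 1 0 + 4 * (W 0 0 - W 1 1) * (W 0 0 - W 1 1) - 4) * hbc
            - (16 * E 0 1 * W 1 0 + 4) * hC1
  · -- det E = 1 : E = 1, so 1 - A = -W
    right; left
    have hu : IsUnit E := (Matrix.isUnit_iff_isUnit_det E).mpr (by rw [hd1]; exact isUnit_one)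
    have hE1 : E = 1 := by
      have : E * E = E * 1 := by rw [(hE : E * E = E), mul_one]
      exact hu.mul_left_cancel this
    have hrw : (1 : Matrix (Fin 2) (Fin 2) R) - (E + W) = -W := by rw [hE1]; abel
    rw [hrw]
    intro i j
    have : (-W) i j = -(W i j) := rfl
    rw [this]
    exact neg_mem (hWn i j)
end

section
/- Let R be a commutative local ring and A ∈ M₂(R). Then A is strongly P-clean if and only if (1) A ∈ M₂(P(R)), or (2) I₂ − A ∈ M₂(P(R)), or (3) A is strongly π-regular in M₂(R) and A is similar to a matrix [[0, λ], [1, μ]] with λ ∈ P(R) and μ ∈ 1 + P(R). -/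
/-- An element `a` of a ring is strongly π-regular if `aⁿ = aⁿ⁺¹ b` for some
positive integer `n` and some `b` commuting with `a`. -/
def IsStronglyPiRegular {S : Type*} [Ring S] (a : S) : Prop :=
  ∃ n : ℕ, 0 < n ∧ ∃ b : S, a ^ n = a ^ (n + 1) * b ∧ a * b = b * a

section Aux

lemma isNilpotent_of_isStronglyNilpotent {S : Type*} [Ring S] {a : S}
    (h : IsStronglyNilpotent a) : IsNilpotent a := by
  obtain ⟨n, hn⟩ := h (fun k => a ^ (2 ^ k)) (by simp) (fun i => ⟨1, by
    show a ^ 2 ^ (i + 1) = a ^ 2 ^ i * 1 * a ^ 2 ^ i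
    rw [mul_one, ← pow_add]
    congr 1
    rw [pow_succ]
    omega⟩)
  exact ⟨2 ^ n, hn⟩

variable {R : Type*} [CommRing R]

lemma stronglyNilpotent_of_entries {M : Matrix (Fin 2) (Fin 2) R}
    (h : ∀ i j, M i j ∈ nilradical R) : IsStronglyNilpotent M := by
  intro f hf0 hstep
  set J : Ideal R := Ideal.span {M 0 0, M 0 1, M 1 0, M 1 1} with hJ
  have hJle : J ≤ (⊥ : Ideal R).radical := by
    rw [hJ, Ideal.span_le]
    rintro x hx
    simp only [Set.mem_insert_iff, Set.mem_singleton_iff] at hx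
    rcases hx with h'|h'|h'|h' <;> subst h' <;> exact h _ _
  obtain ⟨m, hm⟩ := Ideal.exists_pow_le_of_le_radical_of_fg hJle
    (Submodule.fg_span (Set.toFinite _))
  have key : ∀ n, ∀ i j, f n i j ∈ J ^ (n + 1) := by
    intro n
    induction n with
    | zero =>
      intro i j
      rw [pow_one, hf0]
      fin_cases i <;> fin_cases j <;> exact Ideal.subset_span (by simp)
    | succ n ih =>
      obtain ⟨r, hr⟩ := hstep n
      intro i j
      rw [hr]
      have h1 : ∀ i j, (f n * r) i j ∈ J ^ (n + 1) := by
        intro i j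
        rw [Matrix.mul_apply]
        exact Submodule.sum_mem _ (fun k _ => Ideal.mul_mem_right _ _ (ih i k))
      have h2 : (f n * r * f n) i j ∈ J ^ (n + 1) * J ^ (n + 1) := by
        rw [Matrix.mul_apply]
        exact Submodule.sum_mem _ (fun k _ => Ideal.mul_mem_mul (h1 i k) (ih k j))
      rw [← pow_add] at h2
      exact Ideal.pow_le_pow_right (by omega) h2
  refine ⟨m, ?_⟩
  ext i j
  have h0 := hm (Ideal.pow_le_pow_right (Nat.le_succ m) (key m i j))
  simpa using h0

lemma entries_of_stronglyNilpotent {M : Matrix (Fin 2) (Fin 2) R}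
    (h : IsStronglyNilpotent M) : ∀ i j, M i j ∈ nilradical R := by
  intro i j
  rw [nilradical_eq_sInf, Ideal.mem_sInf]
  rintro p hp
  haveI : p.IsPrime := hp
  classical
  set φ : Matrix (Fin 2) (Fin 2) R →+* Matrix (Fin 2) (Fin 2) (R ⧸ p) :=
    (Ideal.Quotient.mk p).mapMatrix with hφ
  have hφM : IsStronglyNilpotent (φ M) := by
    intro g hg0 hstep
    choose r hr using hstep
    have hsurj : ∀ N : Matrix (Fin 2) (Fin 2) (R ⧸ p), ∃ N', φ N' = N := by
      intro N
      refine ⟨Matrix.of (fun i j => (Ideal.Quotient.mk_surjective (N i j)).choose), ?_⟩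
      ext i j
      exact (Ideal.Quotient.mk_surjective (N i j)).choose_spec
    choose lift hlift using hsurj
    set F : ℕ → Matrix (Fin 2) (Fin 2) R :=
      fun n => Nat.rec M (fun k Fk => Fk * lift (r k) * Fk) n with hF
    have hFφ : ∀ n, φ (F n) = g n := by
      intro n
      induction n with
      | zero => rw [hg0]; rfl
      | succ k ih =>
        show φ (F k * lift (r k) * F k) = g (k + 1)
        rw [map_mul, map_mul, ih, hlift, ← hr]
    obtain ⟨n, hn⟩ := h F rfl (fun k => ⟨lift (r k), rfl⟩)
    exact ⟨n, by rw [← hFφ, hn, map_zero]⟩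
  have hdom : φ M = 0 := by
    by_contra hne
    have key : ∀ X : Matrix (Fin 2) (Fin 2) (R ⧸ p), X ≠ 0 → ∃ Y, X * Y * X ≠ 0 := by
      intro X hX
      have hex : ∃ a b, X a b ≠ 0 := by
        by_contra hall
        push_neg at hall
        exact hX (by ext a b; simpa using hall a b)
      obtain ⟨a, b, hab⟩ := hex
      refine ⟨Matrix.single b a (1 : R ⧸ p), fun h0 => ?_⟩
      have hcalc : (X * Matrix.single b a (1 : R ⧸ p) * X) a b
          = X a b * X a b := by
        rw [Matrix.mul_apply]
        have h1 : ∀ k, (X * Matrix.single b a (1 : R ⧸ p)) a k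
            = if k = a then X a b else 0 := by
          intro k
          rw [Matrix.mul_apply]
          simp only [Matrix.single, Matrix.of_apply, mul_ite, mul_one,
            mul_zero, Fin.sum_univ_two]
          by_cases hka : a = k
          · subst hka; fin_cases b <;> simp
          · simp [hka, Ne.symm hka]
        simp only [h1]
        simp [ite_mul, zero_mul, Finset.sum_ite_eq]
      rw [h0] at hcalc
      simp only [Matrix.zero_apply] at hcalc
      exact hab (mul_self_eq_zero.mp hcalc.symm)
    set G : ℕ → Matrix (Fin 2) (Fin 2) (R ⧸ p) := fun n => Nat.rec (φ M)
      (fun _ Gk => if hk : Gk ≠ 0 then Gk * (key Gk hk).choose * Gk else 0) n with hG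
    have hGne : ∀ n, G n ≠ 0 := by
      intro n
      induction n with
      | zero => exact hne
      | succ k ih =>
        show (if hk : G k ≠ 0 then G k * (key (G k) hk).choose * G k else 0) ≠ 0
        rw [dif_pos ih]
        exact (key (G k) ih).choose_spec
    obtain ⟨n, hn⟩ := hφM G rfl (fun k => by
      have hrec : G (k + 1)
          = if hk : G k ≠ 0 then G k * (key (G k) hk).choose * G k else 0 := rfl
      by_cases hk : G k ≠ 0
      · exact ⟨(key (G k) hk).choose, by rw [hrec, dif_pos hk]⟩
      · refine ⟨0, ?_⟩
        rw [hrec, dif_neg hk]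
        push_neg at hk
        rw [hk]
        simp)
    exact hGne n hn
  have hij : (φ M) i j = 0 := by rw [hdom]; rfl
  rw [hφ, RingHom.mapMatrix_apply, Matrix.map_apply] at hij
  exact (Ideal.Quotient.eq_zero_iff_mem).mp hij

lemma exists_nilpotent_root {lam mu : R} (hlam : lam ∈ nilradical R) (hmu : IsUnit mu) :
    ∃ α ∈ nilradical R, α * α = mu * α + lam := by
  suffices H : ∀ m : ℕ, ∀ α : R, α ∈ nilradical R → (α * α - mu * α - lam) ^ m = 0 →
      ∃ β ∈ nilradical R, β * β = mu * β + lam by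
    obtain ⟨m, hm⟩ : IsNilpotent lam := hlam
    refine H m 0 (zero_mem _) ?_
    have h0 : (0 : R) * 0 - mu * 0 - lam = -lam := by ring
    rw [h0, neg_pow, hm, mul_zero]
  intro m
  induction m using Nat.strong_induction_on with
  | _ m ih =>
    intro α hα hε
    rcases Nat.lt_or_ge m 2 with hm2 | hm2
    · interval_cases m
      · have h01 : (1 : R) = 0 := by simpa using hε
        haveI := subsingleton_of_zero_eq_one h01.symm
        exact ⟨0, zero_mem _, Subsingleton.elim _ _⟩
      · have hε1 : α * α - mu * α - lam = 0 := by simpa using hε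
        exact ⟨α, hα, by linear_combination hε1⟩
    · have hεnil : α * α - mu * α - lam ∈ nilradical R := mem_nilradical.mpr ⟨m, hε⟩
      have h2α : IsUnit (mu - 2 * α) := by
        have hn : IsNilpotent (-(2 * α)) :=
          mem_nilradical.mp (neg_mem (Ideal.mul_mem_left _ 2 hα))
        have := hn.isUnit_add_left_of_commute hmu (Commute.all _ _)
        rwa [show mu + -(2*α) = mu - 2*α by ring] at this
      set t : R := ↑h2α.unit⁻¹ with ht
      have htv : (mu - 2 * α) * t = 1 := by
        rw [ht]
        nth_rewrite 1 [← h2α.unit_spec]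
        exact h2α.unit.mul_inv
      set ε := α * α - mu * α - lam with hεdef
      set α' := α + ε * t with hα'def
      have hα' : α' ∈ nilradical R := add_mem hα (Ideal.mul_mem_right _ _ hεnil)
      have hε' : α' * α' - mu * α' - lam = ε * ε * (t * t) := by
        rw [hα'def, hεdef]
        linear_combination (-(α * α - mu * α - lam)) * htv
      have h2 : (α' * α' - mu * α' - lam) ^ (m - 1) = 0 := by
        rw [hε', mul_pow, ← sq, ← pow_mul, show 2 * (m - 1) = m + (m - 2) by omega,
          pow_add, hε, zero_mul, zero_mul]
      exact ih (m - 1) (by omega) α' hα' h2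

lemma isStronglyPiRegular_of_pclean {S : Type*} [Ring S] {E W : S} (he : IsIdempotentElem E)
    (hcomm : E * W = W * E) (hW : IsNilpotent W) : IsStronglyPiRegular (E + W) := by
  obtain ⟨m, hm⟩ := hW
  have hWm : W ^ (m + 1) = 0 := by rw [pow_succ, hm, zero_mul]
  have hkey : ∀ N, m + 1 ≤ N → (E + W) ^ N = E * (1 + W) ^ N := by
    intro N hN
    have hWN : W ^ N = 0 := by
      obtain ⟨k, rfl⟩ := Nat.exists_eq_add_of_le hN
      rw [pow_add, hWm, zero_mul]
    have hc : Commute E W := hcomm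
    rw [Commute.add_pow hc, Commute.add_pow (Commute.one_left W), Finset.mul_sum]
    refine Finset.sum_congr rfl (fun k hk => ?_)
    rcases k with _ | k'
    · simp [hWN]
    · rw [he.pow_succ_eq, one_pow, one_mul, mul_assoc]
  have hu : IsUnit (1 + W) := IsNilpotent.isUnit_one_add ⟨m, hm⟩
  refine ⟨m + 1, Nat.succ_pos m, ↑hu.unit⁻¹, ?_, ?_⟩
  · have h1Wb : (1 + W) * ↑hu.unit⁻¹ = 1 := by
      nth_rewrite 1 [← hu.unit_spec]
      exact hu.unit.mul_inv
    have h3 : (1 + W) ^ (m + 2) = (1 + W) ^ (m + 1) * (1 + W) := pow_succ _ _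
    rw [hkey (m + 1) le_rfl, hkey (m + 2) (by omega), h3, ← mul_assoc,
      mul_assoc (E * (1 + W) ^ (m + 1)), h1Wb, mul_one]
  · have hc2 : Commute (E + W) (1 + W) := by
      have h1 : Commute (E + W) (1 : S) := Commute.one_right _
      have h2 : Commute (E + W) W := Commute.add_left hcomm (Commute.refl W)
      exact h1.add_right h2
    have hc2' : Commute (E + W) (↑hu.unit : S) := by rwa [hu.unit_spec]
    exact hc2'.units_inv_right

lemma conj_entries_mem {M U V : Matrix (Fin 2) (Fin 2) R}
    (hM : ∀ i j, M i j ∈ nilradical R) : ∀ i j, (U * M * V) i j ∈ nilradical R := by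
  intro i j
  rw [Matrix.mul_apply]
  refine Submodule.sum_mem _ (fun k _ => Ideal.mul_mem_right _ _ ?_)
  rw [Matrix.mul_apply]
  exact Submodule.sum_mem _ (fun l _ => Ideal.mul_mem_left _ _ (hM l k))

lemma exists_unit_conj {A C U₀ : Matrix (Fin 2) (Fin 2) R} (hU : IsUnit U₀)
    (hAU : A * U₀ = U₀ * C) :
    ∃ U : (Matrix (Fin 2) (Fin 2) R)ˣ, (U⁻¹).val * A * U.val = C := by
  refine ⟨hU.unit, ?_⟩
  have h1 : (hU.unit : Matrix (Fin 2) (Fin 2) R) = U₀ := hU.unit_spec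
  calc (hU.unit⁻¹).val * A * hU.unit.val
      = (hU.unit⁻¹).val * (A * U₀) := by rw [h1, mul_assoc]
    _ = (hU.unit⁻¹).val * (hU.unit.val * C) := by rw [hAU, h1]
    _ = C := by rw [← mul_assoc, Units.inv_mul, one_mul]

end Aux

/-- **Theorem 5.4.** Let `R` be a commutative local ring and `A ∈ M₂(R)`
(here `P(R)` is the nilradical of `R`). Then `A` is strongly P-clean iff
(1) `A ∈ M₂(P(R))`, or (2) `I₂ - A ∈ M₂(P(R))`, or (3) `A` is strongly
π-regular in `M₂(R)` and `A` is similar to a matrix `[[0, λ], [1, μ]]` with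
`λ ∈ P(R)` and `μ ∈ 1 + P(R)`. -/
theorem isStronglyPClean_matrix_iff_piRegular (R : Type*) [CommRing R]
    [IsLocalRing R] (A : Matrix (Fin 2) (Fin 2) R) :
    IsStronglyPClean A ↔
      ((∀ i j, A i j ∈ nilradical R) ∨
        (∀ i j, (1 - A) i j ∈ nilradical R) ∨
        (IsStronglyPiRegular A ∧
          ∃ (lam mu : R) (U : (Matrix (Fin 2) (Fin 2) R)ˣ),
            lam ∈ nilradical R ∧ (∃ w ∈ nilradical R, mu = 1 + w) ∧
              (U⁻¹).val * A * U.val = !![0, lam; 1, mu])) := by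
  constructor
  · rintro ⟨E, W, he, hw, hA, hcomm⟩
    have hWnil : ∀ i j, W i j ∈ nilradical R := entries_of_stronglyNilpotent hw
    by_cases hE0 : E = 0
    · left
      intro i j
      rw [hA, hE0, zero_add]
      exact hWnil i j
    by_cases hE1 : E = 1
    · right; left
      intro i j
      have h1A : (1 : Matrix (Fin 2) (Fin 2) R) - A = -W := by rw [hA, hE1]; abel
      rw [h1A]
      exact neg_mem (hWnil i j)
    right; right
    -- trace and determinant of E
    have hdetE2 : E.det * E.det = E.det := by rw [← Matrix.det_mul, he]
    have hdet0 : E.det = 0 := by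
      rcases IsLocalRing.isUnit_or_isUnit_one_sub_self E.det with hu | hu
      · exfalso
        apply hE1
        have hEu : IsUnit E := (Matrix.isUnit_iff_isUnit_det E).mpr hu
        exact hEu.mul_left_cancel (by rw [he, mul_one])
      · have hz : (1 - E.det) * E.det = 0 := by linear_combination (-1 : R) * hdetE2
        exact (hu.mul_right_eq_zero).mp hz
    have h1E : IsIdempotentElem (1 - E) := he.one_sub
    have hdet1 : (1 - E).det = 0 := by
      rcases IsLocalRing.isUnit_or_isUnit_one_sub_self (1 - E).det with hu | hu
      · exfalso
        apply hE0
        have hEu : IsUnit (1 - E) := (Matrix.isUnit_iff_isUnit_det _).mpr hu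
        have h1 : (1 : Matrix (Fin 2) (Fin 2) R) - E = 1 :=
          hEu.mul_left_cancel (by rw [h1E, mul_one])
        exact sub_eq_self.mp h1
      · have hdd : (1 - E).det * (1 - E).det = (1 - E).det := by
          rw [← Matrix.det_mul, h1E]
        have hz : (1 - (1 - E).det) * (1 - E).det = 0 := by linear_combination (-1 : R) * hdd
        exact (hu.mul_right_eq_zero).mp hz
    have hd0 : E 0 0 * E 1 1 - E 0 1 * E 1 0 = 0 := by
      rw [← Matrix.det_fin_two]; exact hdet0
    have htr : E 0 0 + E 1 1 = 1 := by
      have h := hdet1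
      rw [Matrix.det_fin_two] at h
      simp only [Matrix.sub_apply, Matrix.one_apply_eq] at h
      have h01 : (1 : Matrix (Fin 2) (Fin 2) R) 0 1 = 0 := Matrix.one_apply_ne (by decide)
      have h10 : (1 : Matrix (Fin 2) (Fin 2) R) 1 0 = 0 := Matrix.one_apply_ne (by decide)
      rw [h01, h10] at h
      linear_combination hd0 - h
    have hdetA : A 0 0 * A 1 1 - A 0 1 * A 1 0 ∈ nilradical R := by
      have hrw : A 0 0 * A 1 1 - A 0 1 * A 1 0 =
          (E 0 0 * E 1 1 - E 0 1 * E 1 0)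
          + (E 0 0 * W 1 1 + W 0 0 * E 1 1 + W 0 0 * W 1 1
             - E 0 1 * W 1 0 - W 0 1 * E 1 0 - W 0 1 * W 1 0) := by
        rw [hA]
        simp only [Matrix.add_apply]
        ring
      rw [hrw, hd0, zero_add]
      refine sub_mem (sub_mem (sub_mem (add_mem (add_mem ?_ ?_) ?_) ?_) ?_) ?_
      · exact Ideal.mul_mem_left _ _ (hWnil 1 1)
      · exact Ideal.mul_mem_right _ _ (hWnil 0 0)
      · exact Ideal.mul_mem_right _ _ (hWnil 0 0)
      · exact Ideal.mul_mem_left _ _ (hWnil 1 0)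
      · exact Ideal.mul_mem_right _ _ (hWnil 0 1)
      · exact Ideal.mul_mem_right _ _ (hWnil 0 1)
    have htrA : A 0 0 + A 1 1 - 1 ∈ nilradical R := by
      have hrw : A 0 0 + A 1 1 - 1 = W 0 0 + W 1 1 := by
        rw [hA]
        simp only [Matrix.add_apply]
        linear_combination htr
      rw [hrw]
      exact add_mem (hWnil 0 0) (hWnil 1 1)
    refine ⟨?_, ?_⟩
    · rw [hA]
      exact isStronglyPiRegular_of_pclean he hcomm (isNilpotent_of_isStronglyNilpotent hw)
    set lam := A 0 1 * A 1 0 - A 0 0 * A 1 1 with hlamdef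
    set mu := A 0 0 + A 1 1 with hmudef
    have hlam : lam ∈ nilradical R := by
      have h' : lam = -(A 0 0 * A 1 1 - A 0 1 * A 1 0) := by rw [hlamdef]; ring
      rw [h']
      exact neg_mem hdetA
    have hmu : ∃ w ∈ nilradical R, mu = 1 + w := ⟨mu - 1, htrA, by ring⟩
    by_cases hc : IsUnit (A 1 0)
    · have hdU : IsUnit (!![1, A 0 0; 0, A 1 0] : Matrix (Fin 2) (Fin 2) R).det := by
        have h' : (!![1, A 0 0; 0, A 1 0] : Matrix (Fin 2) (Fin 2) R).det = A 1 0 := by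
          rw [Matrix.det_fin_two_of]; ring
        rw [h']
        exact hc
      have hAU : A * !![1, A 0 0; 0, A 1 0]
          = !![1, A 0 0; 0, A 1 0] * !![0, lam; 1, mu] := by
        ext i j
        fin_cases i <;> fin_cases j <;>
          simp [Matrix.mul_apply, Fin.sum_univ_two, hlamdef, hmudef] <;> ring
      obtain ⟨U, hU⟩ := exists_unit_conj ((Matrix.isUnit_iff_isUnit_det _).mpr hdU) hAU
      exact ⟨lam, mu, U, hlam, hmu, hU⟩
    by_cases hb : IsUnit (A 0 1)
    · have hdU : IsUnit (!![0, A 0 1; 1, A 1 1] : Matrix (Fin 2) (Fin 2) R).det := by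
        have h' : (!![0, A 0 1; 1, A 1 1] : Matrix (Fin 2) (Fin 2) R).det = -(A 0 1) := by
          rw [Matrix.det_fin_two_of]; ring
        rw [h']
        exact hb.neg
      have hAU : A * !![0, A 0 1; 1, A 1 1]
          = !![0, A 0 1; 1, A 1 1] * !![0, lam; 1, mu] := by
        ext i j
        fin_cases i <;> fin_cases j <;>
          simp [Matrix.mul_apply, Fin.sum_univ_two, hlamdef, hmudef] <;> ring
      obtain ⟨U, hU⟩ := exists_unit_conj ((Matrix.isUnit_iff_isUnit_det _).mpr hdU) hAU
      exact ⟨lam, mu, U, hlam, hmu, hU⟩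
    by_cases hs : IsUnit (A 1 0 + A 1 1 - A 0 0 - A 0 1)
    · have hdU : IsUnit
          (!![1, A 0 0 + A 0 1; 1, A 1 0 + A 1 1] : Matrix (Fin 2) (Fin 2) R).det := by
        have h' : (!![1, A 0 0 + A 0 1; 1, A 1 0 + A 1 1] : Matrix (Fin 2) (Fin 2) R).det
            = A 1 0 + A 1 1 - A 0 0 - A 0 1 := by
          rw [Matrix.det_fin_two_of]; ring
        rw [h']
        exact hs
      have hAU : A * !![1, A 0 0 + A 0 1; 1, A 1 0 + A 1 1]
          = !![1, A 0 0 + A 0 1; 1, A 1 0 + A 1 1] * !![0, lam; 1, mu] := by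
        ext i j
        fin_cases i <;> fin_cases j <;>
          simp [Matrix.mul_apply, Fin.sum_univ_two, hlamdef, hmudef] <;> ring
      obtain ⟨U, hU⟩ := exists_unit_conj ((Matrix.isUnit_iff_isUnit_det _).mpr hdU) hAU
      exact ⟨lam, mu, U, hlam, hmu, hU⟩
    exfalso
    have hp : (IsLocalRing.maximalIdeal R).IsPrime :=
      (IsLocalRing.maximalIdeal.isMaximal R).isPrime
    have hcm : A 1 0 ∈ IsLocalRing.maximalIdeal R :=
      (IsLocalRing.mem_maximalIdeal _).mpr (mem_nonunits_iff.mpr hc)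
    have hbm : A 0 1 ∈ IsLocalRing.maximalIdeal R :=
      (IsLocalRing.mem_maximalIdeal _).mpr (mem_nonunits_iff.mpr hb)
    have hsm : A 1 0 + A 1 1 - A 0 0 - A 0 1 ∈ IsLocalRing.maximalIdeal R :=
      (IsLocalRing.mem_maximalIdeal _).mpr (mem_nonunits_iff.mpr hs)
    have hnle : nilradical R ≤ IsLocalRing.maximalIdeal R := nilradical_le_prime _
    have hdm := hnle hdetA
    have htm := hnle htrA
    have hda : A 1 1 - A 0 0 ∈ IsLocalRing.maximalIdeal R := by
      have h' : A 1 1 - A 0 0 = (A 1 0 + A 1 1 - A 0 0 - A 0 1) - A 1 0 + A 0 1 := by ring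
      rw [h']
      exact add_mem (sub_mem hsm hcm) hbm
    have had : A 0 0 * A 1 1 ∈ IsLocalRing.maximalIdeal R := by
      have h' : A 0 0 * A 1 1 = (A 0 0 * A 1 1 - A 0 1 * A 1 0) + A 0 1 * A 1 0 := by ring
      rw [h']
      exact add_mem hdm (Ideal.mul_mem_right _ _ hbm)
    have haa : A 0 0 * A 0 0 ∈ IsLocalRing.maximalIdeal R := by
      have h' : A 0 0 * A 0 0 = A 0 0 * A 1 1 - A 0 0 * (A 1 1 - A 0 0) := by ring
      rw [h']
      exact sub_mem had (Ideal.mul_mem_left _ _ hda)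
    have ha : A 0 0 ∈ IsLocalRing.maximalIdeal R := by
      rcases hp.mul_mem_iff_mem_or_mem.mp haa with h | h <;> exact h
    have hd : A 1 1 ∈ IsLocalRing.maximalIdeal R := by
      have h' : A 1 1 = (A 1 1 - A 0 0) + A 0 0 := by ring
      rw [h']
      exact add_mem hda ha
    have hone : (1 : R) ∈ IsLocalRing.maximalIdeal R := by
      have h' : (1 : R) = (A 0 0 + A 1 1) - (mu - 1) := by rw [hmudef]; ring
      rw [h']
      exact sub_mem (add_mem ha hd) htm
    exact hp.ne_top ((Ideal.eq_top_iff_one _).mpr hone)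
  · rintro (h1 | h2 | ⟨_, lam, mu, U, hlam, ⟨w, hw, hmu⟩, hUAU⟩)
    · exact ⟨0, A, IsIdempotentElem.zero, stronglyNilpotent_of_entries h1,
        (zero_add A).symm, by rw [zero_mul, mul_zero]⟩
    · refine ⟨1, A - 1, IsIdempotentElem.one, stronglyNilpotent_of_entries
        (fun i j => ?_), by abel, by rw [one_mul, mul_one]⟩
      have hAij : (A - 1) i j = -((1 - A) i j) := by
        simp [Matrix.sub_apply, Matrix.neg_apply]
      rw [hAij]
      exact neg_mem (h2 i j)
    · set C : Matrix (Fin 2) (Fin 2) R := !![0, lam; 1, mu] with hC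
      have hmuU : IsUnit mu := by
        rw [hmu]
        exact (mem_nilradical.mp hw).isUnit_one_add
      obtain ⟨α, hα, hroot⟩ := exists_nilpotent_root hlam hmuU
      have hvnil : mu - 2 * α - 1 ∈ nilradical R := by
        have h' : mu - 2 * α - 1 = w - 2 * α := by rw [hmu]; ring
        rw [h']
        exact sub_mem hw (Ideal.mul_mem_left _ 2 hα)
      have hv : IsUnit (mu - 2 * α) := by
        have h' : mu - 2 * α = 1 + (mu - 2 * α - 1) := by ring
        rw [h']
        exact (mem_nilradical.mp hvnil).isUnit_one_add
      set t : R := ↑hv.unit⁻¹ with ht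
      have htv : t * (mu - 2 * α) = 1 := by
        rw [ht]
        nth_rewrite 2 [← hv.unit_spec]
        exact hv.unit.inv_mul
      have h1t : 1 - t ∈ nilradical R := by
        have h' : 1 - t = t * (mu - 2 * α - 1) := by linear_combination -htv
        rw [h']
        exact Ideal.mul_mem_left _ _ hvnil
      set E₀ : Matrix (Fin 2) (Fin 2) R := !![-α, lam; 1, mu - α] with hE₀
      have hE₀sq : E₀ * E₀ = (mu - 2 * α) • E₀ := by
        ext i j
        fin_cases i <;> fin_cases j <;>
          simp [hE₀, Matrix.mul_apply, Fin.sum_univ_two, Matrix.smul_apply,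
            smul_eq_mul] <;>
          first
          | ring1
          | linear_combination hroot
          | linear_combination -hroot
      have hE' : IsIdempotentElem (t • E₀) := by
        show (t • E₀) * (t • E₀) = t • E₀
        rw [smul_mul_assoc, mul_smul_comm, hE₀sq, smul_smul, smul_smul,
          mul_assoc, htv, mul_one]
      have hE₀C : E₀ * C = C * E₀ := by
        ext i j
        fin_cases i <;> fin_cases j <;>
          simp [hE₀, hC, Matrix.mul_apply, Fin.sum_univ_two] <;> ring
      set W' : Matrix (Fin 2) (Fin 2) R :=
        !![t * α, (1 - t) * lam; 1 - t, mu * (1 - t) + t * α] with hW'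
      have hsum : t • E₀ + W' = C := by
        ext i j
        fin_cases i <;> fin_cases j <;>
          simp [hE₀, hW', hC, Matrix.add_apply, Matrix.smul_apply, smul_eq_mul] <;> ring
      have hW'nil : ∀ i j, W' i j ∈ nilradical R := by
        intro i j
        fin_cases i <;> fin_cases j
        · show t * α ∈ nilradical R
          exact Ideal.mul_mem_left _ _ hα
        · show (1 - t) * lam ∈ nilradical R
          exact Ideal.mul_mem_right _ _ h1t
        · show 1 - t ∈ nilradical R
          exact h1t
        · show mu * (1 - t) + t * α ∈ nilradical R
          exact add_mem (Ideal.mul_mem_left _ _ h1t) (Ideal.mul_mem_left _ _ hα)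
      have hW'eq : W' = C - t • E₀ := eq_sub_of_add_eq' hsum
      have hcomm' : (t • E₀) * W' = W' * (t • E₀) := by
        rw [hW'eq, mul_sub, sub_mul, smul_mul_assoc, mul_smul_comm, hE₀C, mul_smul_comm]
      have hmid : ∀ X Y : Matrix (Fin 2) (Fin 2) R,
          (U.val * X * (U⁻¹).val) * (U.val * Y * (U⁻¹).val)
            = U.val * (X * Y) * (U⁻¹).val := by
        intro X Y
        simp only [mul_assoc, Units.inv_mul_cancel_left]
      have hAeq : U.val * C * (U⁻¹).val = A := by
        rw [← hUAU, ← mul_assoc, ← mul_assoc, Units.mul_inv, one_mul,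
          mul_assoc, Units.mul_inv, mul_one]
      refine ⟨U.val * (t • E₀) * (U⁻¹).val, U.val * W' * (U⁻¹).val, ?_, ?_, ?_, ?_⟩
      · show (U.val * (t • E₀) * (U⁻¹).val) * (U.val * (t • E₀) * (U⁻¹).val)
            = U.val * (t • E₀) * (U⁻¹).val
        rw [hmid, hE']
      · exact stronglyNilpotent_of_entries (conj_entries_mem hW'nil)
      · rw [← hAeq, ← hsum, mul_add, add_mul]
      · rw [hmid, hmid, hcomm']
end
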